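/- arXiv:1811.09224 — 10 statements merged into one kernel-verified Lean document; each statement's English description precedes it below -/
import Mathlib

section
/- Let G be a group, let n ≥ 2 be an integer, and let s, m ∈ G satisfy s^{n²−n+1} = 1 and m·s·m⁻¹ = s^{n−1}. Then for every integer a one has (s^a·m)³ = m³ and (s^a·m²)³ = m⁶. In particular, if moreover m³ = 1, then every element of the form s^a·m or s^a·m² has order dividing 3. -/
/-- In a group `G`, if `s^(n²-n+1) = 1` and `m·s·m⁻¹ = s^(n-1)`, then
`(s^a·m)³ = m³` and `(s^a·m²)³ = m⁶` for every integer `a`; in particular, if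
moreover `m³ = 1`, every element `s^a·m` or `s^a·m²` has order dividing 3. -/
theorem semidirect_cube_identity (G : Type*) [Group G] (n : ℕ) (hn : 2 ≤ n)
    (s m : G) (hs : s ^ (n ^ 2 - n + 1) = 1) (hm : m * s * m⁻¹ = s ^ (n - 1)) :
    (∀ a : ℤ, (s ^ a * m) ^ 3 = m ^ 3 ∧ (s ^ a * m ^ 2) ^ 3 = m ^ 6) ∧
    (m ^ 3 = 1 → ∀ a : ℤ, orderOf (s ^ a * m) ∣ 3 ∧ orderOf (s ^ a * m ^ 2) ∣ 3) := by
  set k : ℤ := (n : ℤ) - 1 with hk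
  have hN : s ^ (k ^ 2 + k + 1) = 1 := by
    have : ((n ^ 2 - n + 1 : ℕ) : ℤ) = k ^ 2 + k + 1 := by
      have h1 : n ≤ n ^ 2 := Nat.le_self_pow (by norm_num) n
      push_cast [Nat.cast_sub h1]
      ring
    calc s ^ (k ^ 2 + k + 1) = s ^ ((n ^ 2 - n + 1 : ℕ) : ℤ) := by rw [this]
      _ = (s ^ (n ^ 2 - n + 1 : ℕ)) ^ (1 : ℤ) := by rw [zpow_natCast, zpow_one]
      _ = 1 := by rw [hs, one_zpow]
  have hNa : ∀ a : ℤ, s ^ (a * (k ^ 2 + k + 1)) = 1 := fun a => by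
    rw [mul_comm, zpow_mul, hN, one_zpow]
  have hm' : m * s * m⁻¹ = s ^ k := by
    rw [hm]
    have : ((n - 1 : ℕ) : ℤ) = k := by
      rw [Nat.cast_sub (by omega)]; push_cast; ring
    rw [← this, zpow_natCast]
  have hms : ∀ a : ℤ, m * s ^ a = s ^ (k * a) * m := by
    intro a
    have h := conj_zpow (a := m) (b := s) (i := a)
    rw [hm', ← zpow_mul] at h
    calc m * s ^ a = (m * s ^ a * m⁻¹) * m := by group
      _ = s ^ (k * a) * m := by rw [← h]
  have key : ∀ a : ℤ, (s ^ a * m) ^ 3 = m ^ 3 ∧ (s ^ a * m ^ 2) ^ 3 = m ^ 6 := by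
    intro a
    have hms2 : ∀ a : ℤ, m ^ 2 * s ^ a = s ^ (k * (k * a)) * m ^ 2 := by
      intro a
      calc m ^ 2 * s ^ a = m * (m * s ^ a) := by rw [pow_two, mul_assoc]
        _ = m * (s ^ (k * a) * m) := by rw [hms]
        _ = (m * s ^ (k * a)) * m := by rw [mul_assoc]
        _ = s ^ (k * (k * a)) * m ^ 2 := by rw [hms, pow_two, mul_assoc]
    constructor
    · calc (s ^ a * m) ^ 3 = s ^ a * (m * s ^ a) * ((m * s ^ a) * m) := by
            rw [show (3:ℕ) = 2 + 1 from rfl, pow_succ, pow_two]; group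
        _ = s ^ a * (s ^ (k * a) * m) * ((s ^ (k * a) * m) * m) := by rw [hms]
        _ = s ^ a * s ^ (k * a) * (m * s ^ (k * a)) * (m * m) := by group
        _ = s ^ a * s ^ (k * a) * (s ^ (k * (k * a)) * m) * (m * m) := by rw [hms]
        _ = s ^ (a + k * a + k * (k * a)) * m ^ 3 := by group; rw [mul_assoc, mul_assoc, ← pow_three]; norm_cast
        _ = s ^ (a * (k ^ 2 + k + 1)) * m ^ 3 := by ring_nf
        _ = m ^ 3 := by rw [hNa, one_mul]
    · calc (s ^ a * m ^ 2) ^ 3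
          = s ^ a * (m ^ 2 * s ^ a) * ((m ^ 2 * s ^ a) * m ^ 2) := by
            rw [show (3:ℕ) = 2 + 1 from rfl, pow_succ, pow_two]; group
        _ = s ^ a * (s ^ (k * (k * a)) * m ^ 2) * ((s ^ (k * (k * a)) * m ^ 2) * m ^ 2) := by
            rw [hms2]
        _ = s ^ a * s ^ (k * (k * a)) * (m ^ 2 * s ^ (k * (k * a))) * (m ^ 2 * m ^ 2) := by
            group
        _ = s ^ a * s ^ (k * (k * a)) * (s ^ (k * (k * (k * (k * a)))) * m ^ 2) *
              (m ^ 2 * m ^ 2) := by rw [hms2]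
        _ = s ^ (a + k * (k * a) + k * (k * (k * (k * a)))) * m ^ 6 := by group
        _ = s ^ ((a * (k ^ 2 - k + 1)) * (k ^ 2 + k + 1)) * m ^ 6 := by ring_nf
        _ = m ^ 6 := by rw [hNa, one_mul]
  refine ⟨key, fun h3 a => ?_⟩
  obtain ⟨h1, h2⟩ := key a
  constructor
  · exact orderOf_dvd_of_pow_eq_one (by rw [h1, h3])
  · exact orderOf_dvd_of_pow_eq_one (by rw [h2, show (6:ℕ) = 3*2 from rfl, pow_mul, h3, one_pow])
end

section
/- Let K be a field and n an integer, and regard g(T) = (n−1)·T³ + (n³−3n²+6n−2)·T² + (n³−3n²+3n+1)·T − (n−1) as a polynomial over K via the canonical map ℤ → K. Then for every t ∈ K with t ≠ 0 and t ≠ −1 one has g(t) = t³·g(−(t+1)/t) and g(t) = −(t+1)³·g(−1/(t+1)). Moreover g(0) = −(n−1) and g(−1) = n−1 in K; consequently, if the characteristic of K does not divide n − 1 and η ∈ K satisfies g(η) = 0, then η ≠ 0, η ≠ −1, and both −1/(η+1) and −(η+1)/η are also roots of g. -/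
/-- Over a field `K`, the cubic
`g(T) = (n-1)T³ + (n³-3n²+6n-2)T² + (n³-3n²+3n+1)T - (n-1)` satisfies
`g(t) = t³·g(-(t+1)/t)` and `g(t) = -(t+1)³·g(-1/(t+1))` for `t ≠ 0, -1`; moreover
`g(0) = -(n-1)` and `g(-1) = n-1`; consequently if `char K ∤ n-1` and `g(η) = 0`,
then `η ≠ 0`, `η ≠ -1` and `-1/(η+1)`, `-(η+1)/η` are also roots of `g`. -/
theorem hurwitz_cubic_root_symmetry (K : Type*) [Field K] (n : ℤ)
    (g : K → K)
    (hg : ∀ t : K, g t = ((n : K) - 1) * t ^ 3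
        + ((n ^ 3 - 3 * n ^ 2 + 6 * n - 2 : ℤ) : K) * t ^ 2
        + ((n ^ 3 - 3 * n ^ 2 + 3 * n + 1 : ℤ) : K) * t - ((n : K) - 1)) :
    (∀ t : K, t ≠ 0 → t ≠ -1 →
      g t = t ^ 3 * g (-(t + 1) / t) ∧ g t = -(t + 1) ^ 3 * g (-1 / (t + 1))) ∧
    g 0 = -((n : K) - 1) ∧ g (-1) = (n : K) - 1 ∧
    (¬ ((ringChar K : ℤ) ∣ (n - 1)) → ∀ η : K, g η = 0 →
      η ≠ 0 ∧ η ≠ -1 ∧ g (-1 / (η + 1)) = 0 ∧ g (-(η + 1) / η) = 0) := by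
  have key : ∀ t : K, t ≠ 0 → t ≠ -1 →
      g t = t ^ 3 * g (-(t + 1) / t) ∧ g t = -(t + 1) ^ 3 * g (-1 / (t + 1)) := by
    intro t ht ht1
    have ht1' : t + 1 ≠ 0 := fun h => ht1 (by linear_combination h)
    constructor
    · rw [hg, hg]
      push_cast
      field_simp
      ring
    · rw [hg, hg]
      push_cast
      field_simp
      ring
  have h0 : g 0 = -((n : K) - 1) := by rw [hg]; push_cast; ring
  have h1 : g (-1) = (n : K) - 1 := by rw [hg]; push_cast; ring
  refine ⟨key, h0, h1, ?_⟩
  intro hchar η hη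
  have hne : (n : K) - 1 ≠ 0 := by
    intro h
    apply hchar
    rw [← CharP.intCast_eq_zero_iff K (ringChar K)]
    push_cast
    linear_combination h
  have hη0 : η ≠ 0 := by
    intro h; rw [h, h0] at hη; exact hne (by linear_combination -hη)
  have hη1 : η ≠ -1 := by
    intro h; rw [h, h1] at hη; exact hne hη
  have hη1' : η + 1 ≠ 0 := fun h => hη1 (by linear_combination h)
  obtain ⟨k1, k2⟩ := key η hη0 hη1
  refine ⟨hη0, hη1, ?_, ?_⟩
  · have := hη.symm.trans k2
    rcases mul_eq_zero.mp this.symm with h | h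
    · have h3 : (η + 1) ^ 3 = 0 := by linear_combination -h
      exact absurd (pow_eq_zero_iff (by norm_num) |>.mp h3) hη1'
    · exact h
  · have := hη.symm.trans k1
    rcases mul_eq_zero.mp this.symm with h | h
    · exact absurd (pow_eq_zero_iff (by norm_num) |>.mp h) hη0
    · exact h
end

section
/- Let p be an odd prime and let n be an integer such that p does not divide (n² − n)·(n² − n + 1) and p divides n² − 4n + 7. Then p ≥ 7; moreover, in the prime field 𝔽_p the element α := (1 − n)/2 satisfies α² + α + 1 = 0 (i.e., α is a primitive cubic root of unity), and in 𝔽_p[T] one has the factorization g(T) = (n−1)·(T − α)³. -/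
open Polynomial

private lemma aux_zmod5 : ∀ x : ZMod 5, x ^ 2 - 4 * x + 7 ≠ 0 := by decide

/-- For an odd prime `p` with `p ∤ (n²-n)(n²-n+1)` and `p ∣ n²-4n+7`,
one has `p ≥ 7`; in `𝔽_p` the element `α = (1-n)/2` satisfies `α² + α + 1 = 0`,
and in `𝔽_p[T]` the cubic `g` factors as `(n-1)·(T-α)³`. -/
theorem hurwitz_cubic_triple_root (p : ℕ) [Fact (Nat.Prime p)] (hodd : Odd p)
    (n : ℤ) (h1 : ¬ (p : ℤ) ∣ (n ^ 2 - n) * (n ^ 2 - n + 1))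
    (h2 : (p : ℤ) ∣ n ^ 2 - 4 * n + 7) :
    7 ≤ p ∧
    ((1 - (n : ZMod p)) / 2) ^ 2 + (1 - (n : ZMod p)) / 2 + 1 = 0 ∧
    (C ((n : ZMod p) - 1) * X ^ 3
        + C ((n ^ 3 - 3 * n ^ 2 + 6 * n - 2 : ℤ) : ZMod p) * X ^ 2
        + C ((n ^ 3 - 3 * n ^ 2 + 3 * n + 1 : ℤ) : ZMod p) * X
        - C ((n : ZMod p) - 1)
      = C ((n : ZMod p) - 1) * (X - C ((1 - (n : ZMod p)) / 2)) ^ 3) := by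
  have hp : Nat.Prime p := Fact.out
  have hp2 : p ≠ 2 := by rintro rfl; rw [Nat.odd_iff] at hodd; omega
  have h2' : (n : ZMod p) ^ 2 - 4 * (n : ZMod p) + 7 = 0 := by
    have := (ZMod.intCast_zmod_eq_zero_iff_dvd _ p).mpr h2
    push_cast at this
    linear_combination this
  have h2ne : (2 : ZMod p) ≠ 0 := by
    have : ((2:ℕ) : ZMod p) ≠ 0 := by
      rw [Ne, ZMod.natCast_eq_zero_iff]
      exact fun h => hp2 ((Nat.prime_dvd_prime_iff_eq hp Nat.prime_two).mp h)
    simpa using this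
  have h4ne : (4 : ZMod p) ≠ 0 := by
    have := mul_ne_zero h2ne h2ne
    rwa [show (2 : ZMod p) * 2 = 4 by norm_num] at this
  have hp3 : p ≠ 3 := by
    rintro rfl
    apply h1
    apply Dvd.dvd.mul_left
    have h3 : ((3:ℕ):ℤ) ∣ 3*n - 6 := ⟨n-2, by push_cast; ring⟩
    have := dvd_add h2 h3
    convert this using 1
    ring
  have hp5 : p ≠ 5 := by
    rintro rfl
    exact aux_zmod5 _ h2'
  have h7 : 7 ≤ p := by
    rcases Nat.lt_or_ge p 7 with h | h
    · have := hp.two_le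
      interval_cases p <;> simp_all <;> norm_num at hp
    · exact h
  set α : ZMod p := (1 - (n : ZMod p)) / 2 with hα_def
  have htwo : (2 : ZMod p) * α = 1 - (n : ZMod p) := by
    rw [hα_def, mul_div_cancel₀ _ h2ne]
  have hα : α ^ 2 + α + 1 = 0 := by
    have key : (4 : ZMod p) * (α ^ 2 + α + 1) = 4 * 0 := by
      linear_combination (2*α + (3 - (n:ZMod p))) * htwo + h2'
    exact mul_left_cancel₀ h4ne key
  have hα3 : α ^ 3 = 1 := by linear_combination (α - 1) * hα
  have e2 : ((n^3 - 3*n^2 + 6*n - 2 : ℤ) : ZMod p) = ((n:ZMod p) - 1) * (-(3 * α)) := by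
    have key : (2:ZMod p) * ((n:ZMod p)^3 - 3*(n:ZMod p)^2 + 6*(n:ZMod p) - 2)
        = 2 * (((n:ZMod p) - 1) * (-(3 * α))) := by
      linear_combination (3*((n:ZMod p) - 1)) * htwo + (2*(n:ZMod p) - 1) * h2'
    have := mul_left_cancel₀ h2ne key
    push_cast
    exact this
  have e1 : ((n^3 - 3*n^2 + 3*n + 1 : ℤ) : ZMod p) = ((n:ZMod p) - 1) * (3 * α^2) := by
    have key : (4:ZMod p) * ((n:ZMod p)^3 - 3*(n:ZMod p)^2 + 3*(n:ZMod p) + 1)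
        = 4 * (((n:ZMod p) - 1) * (3 * α^2)) := by
      linear_combination (-6*((n:ZMod p) - 1)*α + 3*((n:ZMod p) - 1)^2) * htwo
        + ((n:ZMod p) + 1) * h2'
    have := mul_left_cancel₀ h4ne key
    push_cast
    exact this
  have e0 : α ^ 3 * ((n:ZMod p) - 1) = ((n:ZMod p) - 1) := by rw [hα3, one_mul]
  refine ⟨h7, hα, ?_⟩
  have hP2 : (C ((n^3 - 3*n^2 + 6*n - 2 : ℤ) : ZMod p) : (ZMod p)[X])
      = C ((n:ZMod p) - 1) * (-(3 * C α)) := by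
    rw [e2, map_mul, map_neg, map_mul, map_ofNat]
  have hP1 : (C ((n^3 - 3*n^2 + 3*n + 1 : ℤ) : ZMod p) : (ZMod p)[X])
      = C ((n:ZMod p) - 1) * (3 * C α ^ 2) := by
    rw [e1, map_mul, map_mul, map_pow, map_ofNat]
  have hP0 : (C α : (ZMod p)[X]) ^ 3 * C ((n:ZMod p) - 1) = C ((n:ZMod p) - 1) := by
    rw [← map_pow, ← map_mul, e0]
  linear_combination (X : (ZMod p)[X])^2 * hP2 + X * hP1 + hP0
end

section
/- Let K be an algebraically closed field of characteristic p > 2 and let n be an integer such that p does not divide (n² − n)·(n² − n + 1) and p does not divide n² − 4n + 7. Let η ∈ K be any root of g(T), regarded over K. Then η ≠ 0 and η ≠ −1, in K[T] one has the factorization g(T) = (n−1)·(T − η)·(T + 1/(η+1))·(T + (η+1)/η), and the three roots η, −1/(η+1), −(η+1)/η are pairwise distinct. -/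
open Polynomial

/-- Over an algebraically closed field `K` of characteristic `p > 2`
with `p ∤ (n²-n)(n²-n+1)` and `p ∤ n²-4n+7`, any root `η` of the cubic `g` satisfies
`η ≠ 0`, `η ≠ -1`, and `g(T) = (n-1)(T-η)(T+1/(η+1))(T+(η+1)/η)` in `K[T]`, the
three roots `η`, `-1/(η+1)`, `-(η+1)/η` being pairwise distinct. -/
theorem hurwitz_cubic_three_distinct_roots (K : Type*) [Field K] [IsAlgClosed K]
    (p : ℕ) [CharP K p] (hp : 2 < p) (n : ℤ)
    (h1 : ¬ (p : ℤ) ∣ (n ^ 2 - n) * (n ^ 2 - n + 1))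
    (h2 : ¬ (p : ℤ) ∣ n ^ 2 - 4 * n + 7)
    (η : K)
    (hη : ((n : K) - 1) * η ^ 3 + ((n ^ 3 - 3 * n ^ 2 + 6 * n - 2 : ℤ) : K) * η ^ 2
        + ((n ^ 3 - 3 * n ^ 2 + 3 * n + 1 : ℤ) : K) * η - ((n : K) - 1) = 0) :
    η ≠ 0 ∧ η ≠ -1 ∧
    (C ((n : K) - 1) * X ^ 3
        + C ((n ^ 3 - 3 * n ^ 2 + 6 * n - 2 : ℤ) : K) * X ^ 2
        + C ((n ^ 3 - 3 * n ^ 2 + 3 * n + 1 : ℤ) : K) * X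
        - C ((n : K) - 1)
      = C ((n : K) - 1) * (X - C η) * (X + C (1 / (η + 1))) * (X + C ((η + 1) / η))) ∧
    η ≠ -(1 / (η + 1)) ∧ η ≠ -((η + 1) / η) ∧ -(1 / (η + 1)) ≠ -((η + 1) / η) := by
  have castzero : ∀ x : ℤ, ((x : K) = 0 ↔ (p:ℤ) ∣ x) := fun x =>
    CharP.intCast_eq_zero_iff K p x
  have ha : (n : K) - 1 ≠ 0 := by
    intro h
    have : ((n - 1 : ℤ) : K) = 0 := by push_cast; linear_combination h
    exact h1 (dvd_trans ((castzero _).mp this) ⟨n * (n^2 - n + 1), by ring⟩)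
  have hP1 : ((n^2 - n + 1 : ℤ) : K) ≠ 0 := by
    intro h
    exact h1 (dvd_trans ((castzero _).mp h) ⟨n^2 - n, by ring⟩)
  have hP2 : ((n^2 - 4*n + 7 : ℤ) : K) ≠ 0 := fun h => h2 ((castzero _).mp h)
  have hη' : ((n : K) - 1) * η ^ 3 + ((n:K)^3 - 3*(n:K)^2 + 6*(n:K) - 2) * η ^ 2
      + ((n:K)^3 - 3*(n:K)^2 + 3*(n:K) + 1) * η - ((n : K) - 1) = 0 := by
    push_cast at hη; linear_combination hη
  have h0 : η ≠ 0 := by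
    intro h; subst h
    exact ha (by linear_combination -hη')
  have hm1 : η ≠ -1 := by
    intro h; subst h
    exact ha (by linear_combination hη')
  have hb : η + 1 ≠ 0 := fun h => hm1 (by linear_combination h)
  have hQ : η^2 + η + 1 ≠ 0 := by
    intro hQ
    have h3 : (((n:K)^3 - 3*(n:K)^2 + 3*(n:K) + 1) - ((n:K)^3 - 3*(n:K)^2 + 6*(n:K) - 2)) * η
        - ((n:K)^3 - 3*(n:K)^2 + 6*(n:K) - 2) = 0 := by
      linear_combination hη' - (((n:K)-1)*(η-1) + ((n:K)^3 - 3*(n:K)^2 + 6*(n:K) - 2)) * hQ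
    have h4 : ((n^2 - 4*n + 7 : ℤ) : K) * ((n^2 - n + 1 : ℤ) : K)^2 = 0 := by
      push_cast
      linear_combination ((((n:K)^3 - 3*(n:K)^2 + 3*(n:K) + 1) - ((n:K)^3 - 3*(n:K)^2 + 6*(n:K) - 2))^2) * hQ
        + (-(((n:K)^3 - 3*(n:K)^2 + 3*(n:K) + 1) - ((n:K)^3 - 3*(n:K)^2 + 6*(n:K) - 2)) * η
            - ((n:K)^3 - 3*(n:K)^2 + 3*(n:K) + 1)) * h3
    rcases mul_eq_zero.mp h4 with h | h
    · exact hP2 h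
    · exact hP1 (pow_eq_zero_iff (by norm_num) |>.mp h)
  refine ⟨h0, hm1, ?_, ?_, ?_, ?_⟩
  · -- factorization
    have hebc : η * (1/(η+1)) * ((η+1)/η) = 1 := by field_simp
    have hB : ((n ^ 3 - 3 * n ^ 2 + 6 * n - 2 : ℤ) : K)
        = ((n:K) - 1) * (1/(η+1) + (η+1)/η - η) := by
      push_cast
      field_simp
      ring_nf
      linear_combination hη'
    have hC : ((n ^ 3 - 3 * n ^ 2 + 3 * n + 1 : ℤ) : K)
        = ((n:K) - 1) * ((1/(η+1)) * ((η+1)/η) - η * (1/(η+1)) - η * ((η+1)/η)) := by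
      push_cast
      field_simp
      ring_nf
      linear_combination hη'
    rw [hB, hC]
    have hone : C η * C (1/(η+1)) * C ((η+1)/η) = (1 : K[X]) := by
      rw [← map_mul, ← map_mul, hebc, map_one]
    simp only [map_mul, map_add, map_sub, map_one]
    linear_combination (C ((n:K)) - 1) * hone
  · intro h
    apply hQ
    field_simp at h
    linear_combination h
  · intro h
    apply hQ
    field_simp at h
    linear_combination h
  · intro h
    apply hQ
    field_simp at h
    linear_combination h
end

section
/- Let K be a field of characteristic p > 0, let n ≥ 3 be an integer divisible by p, and write n = p^r·m with r ≥ 1 and p ∤ m; set q = p^r. If λ, t ∈ K are nonzero elements satisfying λ^{q+1} + λ + 1 = 0 and λ^{q+1}·t^{n²−n+1} = λ^n (equivalently, t^{n²−n+1} = λ^{n−q−1}), then λ·(t^n)^n + t^n·(t^{n−1})^n + λ^n·t^{n−1} = 0; that is, the projective point (λ : t^n : t^{n−1}) lies on the Hurwitz curve H_n. -/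
/-- Let `K` have characteristic `p > 0`, `n = p^r·m ≥ 3` with `r ≥ 1`,
`p ∤ m`, and `q = p^r`. If `λ, t ∈ K` are nonzero with `λ^(q+1) + λ + 1 = 0` and
`λ^(q+1)·t^(n²-n+1) = λ^n`, then the projective point `(λ : t^n : t^(n-1))` lies
on the Hurwitz curve `X·Y^n + Y·Z^n + X^n·Z = 0`. -/
theorem hurwitz_weierstrass_points_p_dvd_n (K : Type*) [Field K]
    (p : ℕ) (hp : p.Prime) [CharP K p]
    (n r m : ℕ) (hn : 3 ≤ n) (hr : 1 ≤ r) (hm : ¬ p ∣ m) (hnrm : n = p ^ r * m)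
    (lam t : K) (hlam : lam ≠ 0) (ht : t ≠ 0)
    (h1 : lam ^ (p ^ r + 1) + lam + 1 = 0)
    (h2 : lam ^ (p ^ r + 1) * t ^ (n ^ 2 - n + 1) = lam ^ n) :
    lam * (t ^ n) ^ n + t ^ n * (t ^ (n - 1)) ^ n + lam ^ n * t ^ (n - 1) = 0 := by
  obtain ⟨k, rfl⟩ : ∃ k, n = k + 1 := ⟨n - 1, by omega⟩
  have he : (k + 1) ^ 2 - (k + 1) + 1 = k * k + k + 1 := by
    have h : (k + 1) ^ 2 = k * k + 2 * k + 1 := by ring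
    omega
  rw [he] at h2
  have hA : (t ^ (k + 1)) ^ (k + 1) = t ^ k * t ^ (k * k + k + 1) := by
    rw [← pow_mul, ← pow_add]; congr 1; ring
  have hB : t ^ (k + 1) * (t ^ (k + 1 - 1)) ^ (k + 1) = t ^ k * t ^ (k * k + k + 1) := by
    simp only [Nat.add_sub_cancel]
    rw [← pow_mul, ← pow_add]; congr 1; ring
  rw [hA, hB]
  simp only [Nat.add_sub_cancel]
  linear_combination t ^ k * t ^ (k * k + k + 1) * h1 - t ^ k * h2
end

section
/- Let K be an algebraically closed field of characteristic p > 0 and let n ≥ 3 be an integer with p ∤ n² − n + 1 and n ≢ 2 (mod 3). Suppose (a,b,c) ∈ K³ is a nonzero triple with a·b^n + b·c^n + a^n·c = 0, and suppose there exists λ ∈ K with (b, c, a) = (λa, λb, λc). Then: if p = 3, one has b = a and c = a (so the point is (1:1:1)); if p ≠ 3, there exist α ∈ K with α² + α + 1 = 0 and a nonzero scalar s ∈ K with (a, b, c) = (s·α, s·α², s) (so the point is (α : α² : 1) with α a primitive cubic root of unity). -/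
/-- Over an algebraically closed field of characteristic `p > 0`, with
`p ∤ n²-n+1` and `n ≢ 2 (mod 3)`, any point `(a:b:c)` of the Hurwitz curve fixed by
`μ : (X:Y:Z) ↦ (Y:Z:X)` is `(1:1:1)` if `p = 3`, and of the form `(α:α²:1)` with
`α` a primitive cubic root of unity if `p ≠ 3`. -/
theorem hurwitz_mu_fixed_points (K : Type*) [Field K] [IsAlgClosed K]
    (p : ℕ) [CharP K p] (hp : 0 < p)
    (n : ℕ) (hn : 3 ≤ n) (hpn : ¬ p ∣ (n ^ 2 - n + 1)) (hn3 : n % 3 ≠ 2)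
    (a b c : K) (habc : ¬(a = 0 ∧ b = 0 ∧ c = 0))
    (hcurve : a * b ^ n + b * c ^ n + a ^ n * c = 0)
    (hfix : ∃ lam : K, b = lam * a ∧ c = lam * b ∧ a = lam * c) :
    (p = 3 → b = a ∧ c = a) ∧
    (p ≠ 3 → ∃ α s : K, α ^ 2 + α + 1 = 0 ∧ s ≠ 0 ∧
      a = s * α ∧ b = s * α ^ 2 ∧ c = s) := by
  obtain ⟨lam, hb, hc, ha⟩ := hfix
  have haz : a ≠ 0 := by
    intro h
    exact habc ⟨h, by rw [hb, h, mul_zero], by rw [hc, hb, h, mul_zero, mul_zero]⟩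
  have hl3 : lam ^ 3 = 1 := by
    have h1 : (lam ^ 3 - 1) * a = 0 := by
      have : a = lam * (lam * (lam * a)) := by rw [← hb, ← hc, ← ha]
      linear_combination -this
    rcases mul_eq_zero.mp h1 with h | h
    · linear_combination h
    · exact absurd h haz
  -- rewrite the curve equation
  have hcurve' : a ^ (n + 1) * (lam ^ n + lam ^ (2 * n + 1) + lam ^ 2) = 0 := by
    rw [hb, hc, hb] at hcurve
    calc a ^ (n + 1) * (lam ^ n + lam ^ (2 * n + 1) + lam ^ 2)
        = a * (lam * a) ^ n + lam * a * (lam * (lam * a)) ^ n + a ^ n * (lam * (lam * a)) := by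
          ring
      _ = 0 := hcurve
  have hsum : lam ^ n + lam ^ (2 * n + 1) + lam ^ 2 = 0 := by
    rcases mul_eq_zero.mp hcurve' with h | h
    · exact absurd h (pow_ne_zero _ haz)
    · exact h
  have key : lam ^ 2 + lam + 1 = 0 := by
    have hmod : n % 3 = 0 ∨ n % 3 = 1 := by omega
    rcases hmod with h | h
    · obtain ⟨k, hk⟩ : ∃ k, n = 3 * k := ⟨n / 3, by omega⟩
      subst hk
      have h1 : lam ^ (3 * k) = 1 := by
        rw [pow_mul, hl3, one_pow]
      have h2 : lam ^ (2 * (3 * k) + 1) = lam := by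
        rw [pow_succ, show 2 * (3 * k) = 3 * (2 * k) by ring, pow_mul, hl3, one_pow, one_mul]
      rw [h1, h2] at hsum
      linear_combination hsum
    · obtain ⟨k, hk⟩ : ∃ k, n = 3 * k + 1 := ⟨n / 3, by omega⟩
      subst hk
      have h1 : lam ^ (3 * k + 1) = lam := by
        rw [pow_succ, pow_mul, hl3, one_pow, one_mul]
      have h2 : lam ^ (2 * (3 * k + 1) + 1) = 1 := by
        rw [show 2 * (3 * k + 1) + 1 = 3 * (2 * k + 1) by ring, pow_mul, hl3, one_pow]
      rw [h1, h2] at hsum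
      linear_combination hsum
  have hlne : lam ≠ 0 := by
    intro h
    rw [h] at hl3
    simp at hl3
  constructor
  · intro hp3
    subst hp3
    have h3 : (3 : K) = 0 := CharP.cast_eq_zero K 3
    have hsq : (lam - 1) ^ 2 = 0 := by
      have : ((3 : ℕ) : K) = 0 := h3
      push_cast at this
      linear_combination key - lam * this
    have hl1 : lam = 1 := by
      have := pow_eq_zero_iff (n := 2) (by norm_num) |>.mp hsq
      linear_combination this
    constructor
    · rw [hb, hl1, one_mul]
    · rw [hc, hb, hl1, one_mul, one_mul]
  · intro _
    refine ⟨lam, lam ^ 2 * a, key, mul_ne_zero (pow_ne_zero _ hlne) haz, ?_, ?_, ?_⟩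
    · linear_combination (-a) * hl3
    · rw [hb]; linear_combination (-lam * a) * hl3
    · rw [hc, hb]; ring
end

section
/- Let K be a field of characteristic p > 0 and let n ≥ 3 be an integer with n ≡ 2 (mod 3) and p ∤ n² − n + 1. If (a,b,c) ∈ K³ is a nonzero triple with a·b^n + b·c^n + a^n·c = 0, then there is no λ ∈ K with (b, c, a) = (λa, λb, λc); that is, the automorphism μ : (X:Y:Z) ↦ (Y:Z:X) of the Hurwitz curve H_n has no fixed points on H_n. -/
/-- If `n ≡ 2 (mod 3)` and `p ∤ n²-n+1`, the automorphism
`μ : (X:Y:Z) ↦ (Y:Z:X)` of the Hurwitz curve has no fixed points on the curve. -/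
theorem hurwitz_mu_no_fixed_points (K : Type*) [Field K]
    (p : ℕ) [CharP K p] (hp : 0 < p)
    (n : ℕ) (hn : 3 ≤ n) (hn3 : n % 3 = 2) (hpn : ¬ p ∣ (n ^ 2 - n + 1))
    (a b c : K) (habc : ¬(a = 0 ∧ b = 0 ∧ c = 0))
    (hcurve : a * b ^ n + b * c ^ n + a ^ n * c = 0) :
    ¬ ∃ lam : K, b = lam * a ∧ c = lam * b ∧ a = lam * c := by
  rintro ⟨lam, hb, hc, ha⟩
  have ha0 : a ≠ 0 := by
    intro h
    exact habc ⟨h, by rw [hb, h, mul_zero], by rw [hc, hb, h, mul_zero, mul_zero]⟩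
  have hl3 : lam ^ 3 = 1 := by
    have h : lam ^ 3 * a = 1 * a := by
      rw [one_mul]; nth_rewrite 2 [ha]; rw [hc, hb]; ring
    exact mul_right_cancel₀ ha0 h
  have hl0 : lam ≠ 0 := by
    intro h; rw [h] at hl3; simp at hl3
  obtain ⟨k, hk⟩ : ∃ k, n = 3 * k + 2 := ⟨n / 3, by omega⟩
  have hln : lam ^ n = lam ^ 2 := by
    rw [hk, pow_add, pow_mul, hl3, one_pow, one_mul]
  have hl2n : lam ^ (2 * n + 1) = lam ^ 2 := by
    have : 2 * n + 1 = 3 * (2 * k + 1) + 2 := by omega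
    rw [this, pow_add, pow_mul, hl3, one_pow, one_mul]
  have key : (3 : K) * (lam ^ 2 * a ^ (n + 1)) = 0 := by
    have e : a * b ^ n + b * c ^ n + a ^ n * c
        = (lam ^ n + lam ^ (2 * n + 1) + lam ^ 2) * a ^ (n + 1) := by
      rw [hb, hc, hb]
      rw [mul_pow, mul_pow, mul_pow, pow_add, pow_add, pow_mul, pow_one, pow_one]
      ring
    rw [hcurve, hln, hl2n] at e
    linear_combination -e
  have h3 : (3 : K) = 0 := by
    rcases mul_eq_zero.mp key with h | h
    · exact h
    · rcases mul_eq_zero.mp h with h' | h'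
      · exact absurd (pow_eq_zero_iff (by norm_num)|>.mp h') hl0
      · exact absurd (pow_eq_zero_iff (by omega)|>.mp h') ha0
  have hp3 : p ∣ 3 := by
    have := (CharP.cast_eq_zero_iff K p 3).mp (by exact_mod_cast h3)
    exact this
  have : NeZero p := ⟨hp.ne'⟩
  have hpprime : p.Prime := CharP.char_is_prime_of_pos K p |>.out
  have hp3' : p = 3 := (Nat.prime_dvd_prime_iff_eq hpprime (by norm_num)).mp hp3
  apply hpn
  have h2 : n ^ 2 = 9 * k ^ 2 + 12 * k + 4 := by rw [hk]; ring
  rw [hp3']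
  omega
end

section
/- Let K be a field of characteristic p > 0, let n ≥ 3 be an integer with n ≡ 2 (mod 3) and p ∤ n² − n + 1, and let α ∈ K satisfy α² + α + 1 = 0. For a nonzero triple (a,b,c) ∈ K³ with a·b^n + b·c^n + a^n·c = 0, there exists λ ∈ K with (α²·b, α·c, a) = (λa, λb, λc) if and only if (a,b,c) is a nonzero scalar multiple of (α, 1, 1), of (1, α, 1), or of (1, 1, α). -/
/-- If `n ≡ 2 (mod 3)`, `p ∤ n²-n+1` and `α² + α + 1 = 0`, then a point
`(a:b:c)` of the Hurwitz curve is fixed by `τμ` (i.e. `(α²b, αc, a) = λ·(a,b,c)` for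
some `λ`) if and only if `(a,b,c)` is a nonzero scalar multiple of `(α,1,1)`,
`(1,α,1)` or `(1,1,α)`. -/
theorem hurwitz_tau_mu_fixed_points (K : Type*) [Field K]
    (p : ℕ) [CharP K p] (hp : 0 < p)
    (n : ℕ) (hn : 3 ≤ n) (hn3 : n % 3 = 2) (hpn : ¬ p ∣ (n ^ 2 - n + 1))
    (α : K) (hα : α ^ 2 + α + 1 = 0)
    (a b c : K) (habc : ¬(a = 0 ∧ b = 0 ∧ c = 0))
    (hcurve : a * b ^ n + b * c ^ n + a ^ n * c = 0) :
    (∃ lam : K, α ^ 2 * b = lam * a ∧ α * c = lam * b ∧ a = lam * c) ↔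
    (∃ s : K, s ≠ 0 ∧ ((a = s * α ∧ b = s ∧ c = s) ∨
      (a = s ∧ b = s * α ∧ c = s) ∨ (a = s ∧ b = s ∧ c = s * α))) := by
  have hα3 : α ^ 3 = 1 := by linear_combination (α - 1) * hα
  have hαne : α ≠ 0 := by
    intro h
    rw [h] at hα3
    simp at hα3
  constructor
  · rintro ⟨lam, h1, h2, h3⟩
    have ha : a ≠ 0 := by
      intro h
      apply habc
      have hb : b = 0 := by
        have : α ^ 2 * b = 0 := by rw [h1, h, mul_zero]
        exact (mul_eq_zero.mp this).resolve_left (pow_ne_zero 2 hαne)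
      have hc : c = 0 := by
        have : α * c = 0 := by rw [h2, hb, mul_zero]
        exact (mul_eq_zero.mp this).resolve_left hαne
      exact ⟨h, hb, hc⟩
    have hc : c ≠ 0 := by
      intro h
      apply ha
      rw [h3, h, mul_zero]
    have hb : b ≠ 0 := by
      intro h
      apply hc
      have : α * c = 0 := by rw [h2, h, mul_zero]
      exact (mul_eq_zero.mp this).resolve_left hαne
    have hlam3 : lam ^ 3 = 1 := by
      have key : (lam ^ 3 - 1) * (a * b * c) = 0 := by
        linear_combination (-(α * c * a)) * h1 + (-(lam * a * a)) * h2 +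
          (-(lam ^ 2 * a * b)) * h3 + (a * b * c) * hα3
      exact sub_eq_zero.mp ((mul_eq_zero.mp key).resolve_right
        (mul_ne_zero (mul_ne_zero ha hb) hc))
    have hsplit : (lam - 1) * ((lam - α) * (lam - α ^ 2)) = 0 := by
      linear_combination hlam3 + (α - 1 - lam) * (lam - 1) * hα
    rcases mul_eq_zero.mp hsplit with h | h
    · -- lam = 1
      have hl : lam = 1 := sub_eq_zero.mp h
      refine ⟨c, hc, Or.inr (Or.inl ⟨?_, ?_, rfl⟩)⟩
      · linear_combination h3 + c * hl
      · linear_combination -h2 - b * hl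
    · rcases mul_eq_zero.mp h with h' | h'
      · -- lam = α
        have hl : lam = α := sub_eq_zero.mp h'
        refine ⟨b, hb, Or.inl ⟨?_, rfl, ?_⟩⟩
        · apply mul_left_cancel₀ hαne
          linear_combination -h1 - a * hl
        · apply mul_left_cancel₀ hαne
          linear_combination h2 + b * hl
      · -- lam = α ^ 2
        have hl : lam = α ^ 2 := sub_eq_zero.mp h'
        refine ⟨a, ha, Or.inr (Or.inr ⟨rfl, ?_, ?_⟩)⟩
        · apply mul_left_cancel₀ (pow_ne_zero 2 hαne)
          linear_combination h1 + a * hl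
        · apply mul_left_cancel₀ hαne
          linear_combination -α ^ 2 * h3 - c * α ^ 2 * hl - c * α * hα3
  · rintro ⟨s, hs, ⟨ha, hb, hc⟩ | ⟨ha, hb, hc⟩ | ⟨ha, hb, hc⟩⟩
    · exact ⟨α, by linear_combination α ^ 2 * hb - α * ha,
        by linear_combination α * hc - α * hb,
        by linear_combination ha - α * hc⟩
    · exact ⟨1, by linear_combination α ^ 2 * hb - ha + s * hα3,
        by linear_combination α * hc - hb,
        by linear_combination ha - hc⟩
    · exact ⟨α ^ 2, by linear_combination α ^ 2 * hb - α ^ 2 * ha,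
        by linear_combination α * hc - α ^ 2 * hb,
        by linear_combination ha - α ^ 2 * hc - s * hα3⟩
end

section
/- Let p be an odd prime, let K be an algebraically closed field of characteristic p, and let n ≥ 1 be an integer with p ∤ n. Then the image in K[x] of the Lucas-type polynomial L_n is a monic polynomial of degree n which is separable (it has n distinct roots in K). -/
/-- The Lucas-type polynomials: `L₀ = 2`, `L₁ = x`, `Lₖ = x·Lₖ₋₁ - Lₖ₋₂`. -/
noncomputable def lucasPoly : ℕ → Polynomial ℤ
  | 0 => 2
  | 1 => Polynomial.X
  | (k + 2) => Polynomial.X * lucasPoly (k + 1) - lucasPoly k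

open Polynomial in
lemma lucasPoly_eq_dickson : ∀ n, lucasPoly n = Polynomial.dickson 1 1 n
  | 0 => by simp [lucasPoly, Polynomial.dickson_zero]; norm_num
  | 1 => by simp [lucasPoly, Polynomial.dickson_one]
  | (n + 2) => by
    rw [lucasPoly, lucasPoly_eq_dickson n, lucasPoly_eq_dickson (n + 1),
      Polynomial.dickson_add_two]
    simp

open Polynomial in
lemma dickson_one_one_monic (K : Type*) [Field K] :
    ∀ n, (dickson 1 (1 : K) n).natDegree ≤ n ∧
      (1 ≤ n → (dickson 1 (1 : K) n).Monic ∧ (dickson 1 (1 : K) n).natDegree = n)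
  | 0 => by
    refine ⟨?_, by omega⟩
    simp only [dickson_zero, Nat.cast_one]
    norm_num [natDegree_ofNat]
  | 1 => by
    refine ⟨le_of_eq ?_, fun _ => ⟨?_, ?_⟩⟩ <;> simp [dickson_one, monic_X]
  | (n + 2) => by
    obtain ⟨h0, -⟩ := dickson_one_one_monic K n
    obtain ⟨-, h1⟩ := dickson_one_one_monic K (n + 1)
    obtain ⟨hm, hd⟩ := h1 (by omega)
    have hmX : (X * dickson 1 (1 : K) (n + 1)).Monic := monic_X.mul hm
    have hdX : (X * dickson 1 (1 : K) (n + 1)).natDegree = n + 2 := by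
      rw [natDegree_mul X_ne_zero hm.ne_zero, natDegree_X, hd]
      omega
    have hlt : (dickson 1 (1 : K) n).degree < (X * dickson 1 (1 : K) (n + 1)).degree := by
      refine lt_of_le_of_lt degree_le_natDegree ?_
      rw [degree_eq_natDegree hmX.ne_zero, hdX]
      exact_mod_cast lt_of_le_of_lt h0 (by omega : n < n + 2)
    have key : (dickson 1 (1 : K) (n + 2)).Monic ∧
        (dickson 1 (1 : K) (n + 2)).natDegree = n + 2 := by
      rw [dickson_add_two, C_1, one_mul]
      refine ⟨hmX.sub_of_left hlt, ?_⟩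
      rw [natDegree_sub_eq_left_of_natDegree_lt
        (by omega : (dickson 1 (1:K) n).natDegree < (X * dickson 1 (1:K) (n+1)).natDegree), hdX]
    exact ⟨le_of_eq key.2, fun _ => key⟩

open Polynomial in
/-- Over an algebraically closed field `K` of odd characteristic `p`
with `p ∤ n`, the image in `K[x]` of the Lucas-type polynomial `L_n` is monic of
degree `n` and separable, having `n` distinct roots in `K`. -/
theorem lucasPoly_separable (p : ℕ) (hp : p.Prime) (hodd : Odd p)
    (K : Type*) [Field K] [IsAlgClosed K] [CharP K p]
    (n : ℕ) (hn : 1 ≤ n) (hpn : ¬ p ∣ n) :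
    ((lucasPoly n).map (Int.castRingHom K)).Monic ∧
    ((lucasPoly n).map (Int.castRingHom K)).natDegree = n ∧
    ((lucasPoly n).map (Int.castRingHom K)).Separable ∧
    ((lucasPoly n).map (Int.castRingHom K)).roots.card = n ∧ ((lucasPoly n).map (Int.castRingHom K)).roots.Nodup := by
  classical
  have hmap : (lucasPoly n).map (Int.castRingHom K) = dickson 1 (1 : K) n := by
    rw [lucasPoly_eq_dickson, map_dickson]
    norm_num
  set f : K[X] := dickson 1 (1 : K) n with hf
  obtain ⟨hmonic, hdeg⟩ := (dickson_one_one_monic K n).2 hn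
  have hsplits : Splits f := IsAlgClosed.splits f
  have hcard : f.roots.card = n := by
    rw [← hdeg]; exact splits_iff_card_roots.mp hsplits
  -- the polynomial g = X^(2n) + 1 is separable with 2n distinct roots
  have hp2 : ¬ p ∣ 2 := by
    intro h
    have h2 := (Nat.prime_dvd_prime_iff_eq hp Nat.prime_two).mp h
    rw [h2] at hodd
    exact (Nat.not_odd_iff_even.mpr even_two) hodd
  have hp2n : ¬ p ∣ 2 * n := fun h => ((Nat.Prime.dvd_mul hp).mp h).elim hp2 hpn
  set g : K[X] := X ^ (2 * n) - C (-1) with hg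
  have hgm : g.Monic := monic_X_pow_sub_C _ (by omega)
  have hgsep : g.Separable := separable_X_pow_sub_C' p (2 * n) (-1) hp2n (by norm_num)
  have hgnodup : g.roots.Nodup := nodup_roots hgsep
  have hgcard : g.roots.card = 2 * n := by
    have h1 : g.natDegree = 2 * n := natDegree_X_pow_sub_C
    rw [← h1]
    exact splits_iff_card_roots.mp (IsAlgClosed.splits g)
  set S : Finset K := g.roots.toFinset with hS
  have hScard : S.card = 2 * n := by
    rw [hS, Multiset.toFinset_card_eq_card_iff_nodup.mpr hgnodup, hgcard]
  have hSmem : ∀ ζ ∈ S, ζ ^ (2 * n) = -1 := by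
    intro ζ hζ
    have h1 := (mem_roots hgm.ne_zero).mp (Multiset.mem_toFinset.mp hζ)
    rw [hg] at h1
    have h2 : ζ ^ (2 * n) + 1 = 0 := by simpa [IsRoot, sub_eq_zero] using h1
    linear_combination h2
  have hSne : ∀ ζ ∈ S, ζ ≠ 0 := by
    intro ζ hζ h0
    have h1 := hSmem ζ hζ
    rw [h0, zero_pow (by omega)] at h1
    exact one_ne_zero (neg_eq_zero.mp h1.symm)
  -- the map ζ ↦ ζ + ζ⁻¹ sends S into the roots of f
  set φ : K → K := fun ζ => ζ + ζ⁻¹ with hφ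
  have hroot : ∀ ζ ∈ S, f.eval (φ ζ) = 0 := by
    intro ζ hζ
    have hζ0 := hSne ζ hζ
    have h1 : ζ * ζ⁻¹ = 1 := mul_inv_cancel₀ hζ0
    have heval := dickson_one_one_eval_add_inv ζ ζ⁻¹ h1 n
    have h2 : (ζ ^ n) ^ 2 = -1 := by
      rw [← pow_mul, mul_comm n 2]; exact hSmem ζ hζ
    have h3 : ζ ^ n * -(ζ ^ n) = 1 := by rw [mul_neg, ← sq, h2, neg_neg]
    simp only [← hf] at heval
    rw [hφ]
    simp only []
    rw [heval, inv_pow, inv_eq_of_mul_eq_one_right h3]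
    ring
  -- fibers of φ on S have at most 2 elements
  have hfiber : ∀ a ∈ S.image φ, (S.filter fun x => φ x = a).card ≤ 2 := by
    intro a _
    rcases Finset.eq_empty_or_nonempty (S.filter fun x => φ x = a) with he | ⟨c, hc⟩
    · simp [he]
    · have hc' := Finset.mem_filter.mp hc
      have hc0 := hSne c hc'.1
      have hsub : (S.filter fun x => φ x = a) ⊆ {c, c⁻¹} := by
        intro d hd
        have hd' := Finset.mem_filter.mp hd
        have hd0 := hSne d hd'.1
        have hcd : c + c⁻¹ = d + d⁻¹ := hc'.2.trans hd'.2.symm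
        have e1 : c * c⁻¹ = 1 := mul_inv_cancel₀ hc0
        have e2 : d * d⁻¹ = 1 := mul_inv_cancel₀ hd0
        have key : (c - d) * (c * d - 1) = 0 := by
          linear_combination c * d * hcd - d * e1 + c * e2
        rcases mul_eq_zero.mp key with h | h
        · exact Finset.mem_insert.mpr (Or.inl (sub_eq_zero.mp h).symm)
        · have hcd1 : c * d = 1 := sub_eq_zero.mp h
          have : d = c⁻¹ := (inv_eq_of_mul_eq_one_right hcd1).symm
          simp [this]
      calc (S.filter fun x => φ x = a).card ≤ ({c, c⁻¹} : Finset K).card :=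
            Finset.card_le_card hsub
        _ ≤ 2 := (Finset.card_insert_le c {c⁻¹}).trans (by simp)
  have himg : n ≤ (S.image φ).card := by
    have := Finset.card_le_mul_card_image S 2 hfiber
    omega
  have hsubroots : S.image φ ⊆ f.roots.toFinset := by
    intro a ha
    obtain ⟨ζ, hζ, rfl⟩ := Finset.mem_image.mp ha
    rw [Multiset.mem_toFinset, mem_roots hmonic.ne_zero]
    exact hroot ζ hζ
  have hle : f.roots.toFinset.card ≤ f.roots.card := Multiset.toFinset_card_le _
  have hge : n ≤ f.roots.toFinset.card :=
    le_trans himg (Finset.card_le_card hsubroots)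
  have heq : f.roots.toFinset.card = Multiset.card f.roots := by omega
  have hnodup : f.roots.Nodup := Multiset.toFinset_card_eq_card_iff_nodup.mp heq
  -- separability from nodup roots
  have hsep : f.Separable := by
    have hprod : f = (f.roots.map fun a => X - C a).prod :=
      hsplits.eq_prod_roots_of_monic hmonic
    have hval : f.roots.toFinset.val = f.roots := Multiset.dedup_eq_self.mpr hnodup
    have hfeq : f = ∏ r ∈ f.roots.toFinset, (X - C r) := by
      rw [Finset.prod_eq_multiset_prod, hval, ← hprod]
    rw [hfeq]
    exact separable_prod_X_sub_C_iff'.mpr fun x _ y _ h => h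
  rw [hmap]
  exact ⟨hmonic, hdeg, hsep, hcard, hnodup⟩
end

section
/- Let K be a field, n ≥ 1 an integer, and let x, y ∈ K with x ≠ 0 satisfy y^n = x^{2n} + 1. Then (y/x)^n = L_n(x + 1/x), where L_n is the n-th Lucas-type polynomial evaluated at x + x⁻¹. In other words, the map (x, y) ↦ (x + 1/x, y/x) sends points of the generalized Fermat curve G_n : y^n = x^{2n} + 1 (with x ≠ 0) to points of the curve C_n : y^n = L_n(x), so C_n is covered by G_n. -/
lemma lucasPoly_eval {K : Type*} [Field K] (x : K) (hx : x ≠ 0) :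
    ∀ n, Polynomial.aeval (x + 1 / x) (lucasPoly n) = x ^ n + (1 / x) ^ n := by
  intro n
  induction n using Nat.strong_induction_on with
  | _ n ih =>
    match n with
    | 0 => norm_num [lucasPoly, map_ofNat]
    | 1 => norm_num [lucasPoly, map_ofNat]
    | (k + 2) =>
      have h1 := ih (k + 1) (by omega)
      have h0 := ih k (by omega)
      simp only [lucasPoly, map_sub, map_mul, Polynomial.aeval_X, h1, h0]
      field_simp
      have hxi : x * x⁻¹ = 1 := mul_inv_cancel₀ hx
      linear_combination (x * x⁻¹ ^ k - x⁻¹ * x⁻¹ ^ k) * hxi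

/-- If `x ≠ 0` and `y^n = x^(2n) + 1` in a field `K`, then
`(y/x)^n = L_n(x + 1/x)`; i.e. the map `(x,y) ↦ (x + 1/x, y/x)` sends points of the
generalized Fermat curve `y^n = x^(2n) + 1` (with `x ≠ 0`) to points of the curve
`C_n : y^n = L_n(x)`, so `C_n` is covered by `G_n`. -/
theorem lucas_curve_covered_by_fermat (K : Type*) [Field K] (n : ℕ) (hn : 1 ≤ n)
    (x y : K) (hx : x ≠ 0) (hy : y ^ n = x ^ (2 * n) + 1) :
    (y / x) ^ n = Polynomial.aeval (x + 1 / x) (lucasPoly n) := by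
  rw [lucasPoly_eval x hx, div_pow, hy, two_mul, pow_add]
  field_simp
  have h : (x * (1 / x)) ^ n = 1 := by rw [mul_one_div_cancel hx, one_pow]
  linear_combination -h
end
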